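/- For t ≥ 1, the tail of the mass of the solution to Smoluchowski's equation with monodisperse initial conditions satisfies Σ_{m ≥ k} m c_t(m) ~ (√2/(t√π)) k^{-1/2} as k → ∞. -/

import Mathlib

/-- The Borel distribution with parameter `λ`: `B(λ,m) = (λm)^{m-1} e^{-λm} / m!`. -/
noncomputable def borelPMF (l : ℝ) (m : ℕ) : ℝ :=
  (l * m) ^ (m - 1) * Real.exp (-(l * m)) / (Nat.factorial m)

/-- The explicit solution to Smoluchowski's equation with monodisperse initial conditions. -/
noncomputable def csol (t : ℝ) (m : ℕ) : ℝ :=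
  if t ≤ 1 then borelPMF t m / m else borelPMF 1 m / (m * t)

open Filter Asymptotics Real Topology



-- shifted summability
lemma shift_summable {f : ℕ → ℝ} (hf : Summable f) (k : ℕ) :
    Summable fun j => f (k + j) := by
  have := (summable_nat_add_iff (f := f) k).2 hf
  simpa [add_comm] using this

-- telescoping tail
lemma telescope_hasSum (f : ℕ → ℝ) (hmono : ∀ n, f (n + 1) ≤ f n)
    (hf : Tendsto f atTop (𝓝 0)) (k : ℕ) :
    HasSum (fun j => f (k + j) - f (k + j + 1)) (f k) := by
  rw [hasSum_iff_tendsto_nat_of_nonneg (fun j => sub_nonneg.2 (hmono (k + j)))]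
  have h1 : ∀ n, ∑ i ∈ Finset.range n, (f (k + i) - f (k + i + 1)) = f k - f (k + n) := by
    intro n
    exact Finset.sum_range_sub' (fun i => f (k + i)) n
  simp only [h1]
  have h2 : Tendsto (fun n => f (k + n)) atTop (𝓝 0) := by
    have := hf.comp (tendsto_add_atTop_nat k)
    simpa [add_comm, Function.comp_def] using this
  simpa using tendsto_const_nhds.sub h2

-- tail asymptotic equivalence
lemma tail_isEquivalent {a b : ℕ → ℝ} (hb0 : ∀ m, 0 ≤ b m) (hbs : Summable b)
    (hab : a ~[atTop] b) :
    (fun k => ∑' j, a (k + j)) ~[atTop] (fun k => ∑' j, b (k + j)) := by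
  have has : Summable a := summable_of_isBigO_nat hbs hab.isBigO
  rw [IsEquivalent] at hab ⊢
  rw [isLittleO_iff] at hab ⊢
  intro c hc
  obtain ⟨N, hN⟩ := (eventually_atTop).1 (hab hc)
  filter_upwards [eventually_ge_atTop N] with k hk
  have ha' : Summable fun j => a (k + j) := shift_summable has k
  have hb' : Summable fun j => b (k + j) := shift_summable hbs k
  have hd : Summable fun j => ‖a (k + j) - b (k + j)‖ := (ha'.sub hb').abs
  have key : ‖(∑' j, a (k + j)) - ∑' j, b (k + j)‖ ≤ c * ∑' j, b (k + j) := by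
    rw [← Summable.tsum_sub ha' hb']
    calc ‖∑' j, (a (k + j) - b (k + j))‖ ≤ ∑' j, ‖a (k + j) - b (k + j)‖ :=
          norm_tsum_le_tsum_norm hd
      _ ≤ ∑' j, c * b (k + j) := by
          refine Summable.tsum_le_tsum (fun j => ?_) hd (hb'.mul_left c)
          have := hN (k + j) (le_trans hk (Nat.le_add_right k j))
          simpa [Real.norm_eq_abs, abs_of_nonneg (hb0 (k + j))] using this
      _ = c * ∑' j, b (k + j) := tsum_mul_left
  have hbt : 0 ≤ ∑' j, b (k + j) := tsum_nonneg (fun j => hb0 (k + j))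
  simpa [Pi.sub_apply, Real.norm_eq_abs, abs_of_nonneg hbt] using key

noncomputable def Ffun : ℕ → ℝ := fun m => Real.sqrt 2 / Real.sqrt π * (Real.sqrt ((m : ℝ) + 1))⁻¹

noncomputable def bfun : ℕ → ℝ := fun m => Ffun m - Ffun (m + 1)

lemma Ffun_anti (n : ℕ) : Ffun (n + 1) ≤ Ffun n := by
  unfold Ffun
  push_cast
  have h1 : (0:ℝ) < Real.sqrt ((n : ℝ) + 1) := Real.sqrt_pos.2 (by positivity)
  have h2 : Real.sqrt ((n : ℝ) + 1) ≤ Real.sqrt ((n : ℝ) + 1 + 1) :=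
    Real.sqrt_le_sqrt (by linarith)
  have : (Real.sqrt ((n : ℝ) + 1 + 1))⁻¹ ≤ (Real.sqrt ((n : ℝ) + 1))⁻¹ :=
    inv_anti₀ h1 h2
  have hc : (0:ℝ) ≤ Real.sqrt 2 / Real.sqrt π := by positivity
  exact mul_le_mul_of_nonneg_left this hc

lemma Ffun_tendsto : Tendsto Ffun atTop (𝓝 0) := by
  have h1 : Tendsto (fun m : ℕ => (m : ℝ) + 1) atTop atTop :=
    tendsto_atTop_add_const_right atTop 1 tendsto_natCast_atTop_atTop
  have h2 : Tendsto (fun m : ℕ => Real.sqrt ((m : ℝ) + 1)) atTop atTop := by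
    apply tendsto_atTop_atTop.2
    intro b
    refine ⟨⌈b ^ 2⌉₊, fun m hm => ?_⟩
    have hb : b ≤ Real.sqrt (b ^ 2) := by
      rw [Real.sqrt_sq_eq_abs]; exact le_abs_self b
    refine hb.trans (Real.sqrt_le_sqrt ?_)
    have h1 : (b ^ 2 : ℝ) ≤ (⌈b ^ 2⌉₊ : ℝ) := Nat.le_ceil _
    have h2 : ((⌈b ^ 2⌉₊ : ℕ) : ℝ) ≤ (m : ℝ) := Nat.cast_le.2 hm
    linarith
  have h3 : Tendsto (fun m : ℕ => (Real.sqrt ((m : ℝ) + 1))⁻¹) atTop (𝓝 0) :=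
    h2.inv_tendsto_atTop
  have := h3.const_mul (Real.sqrt 2 / Real.sqrt π)
  rw [mul_zero] at this; exact this

lemma bfun_pos (m : ℕ) : 0 < bfun m := by
  unfold bfun Ffun
  push_cast
  have h1 : (0:ℝ) < Real.sqrt ((m : ℝ) + 1) := Real.sqrt_pos.2 (by positivity)
  have h2 : Real.sqrt ((m : ℝ) + 1) < Real.sqrt ((m : ℝ) + 1 + 1) :=
    Real.sqrt_lt_sqrt (by positivity) (by linarith)
  have h3 : (Real.sqrt ((m : ℝ) + 1 + 1))⁻¹ < (Real.sqrt ((m : ℝ) + 1))⁻¹ :=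
    inv_strictAnti₀ (by linarith) h2
  have hc : (0:ℝ) < Real.sqrt 2 / Real.sqrt π := by positivity
  rw [← mul_sub]
  exact mul_pos hc (by linarith)

lemma bfun_hasSum (k : ℕ) : HasSum (fun j => bfun (k + j)) (Ffun k) :=
  telescope_hasSum Ffun Ffun_anti Ffun_tendsto k

lemma bfun_summable : Summable bfun := by
  have := (bfun_hasSum 0).summable
  refine this.congr fun j => ?_
  simp [Nat.zero_add]

lemma bfun_tail (k : ℕ) : ∑' j, bfun (k + j) = Ffun k := (bfun_hasSum k).tsum_eq

lemma bfun_eq (m : ℕ) :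
    bfun m = Real.sqrt 2 / Real.sqrt π *
      ((Real.sqrt ((m : ℝ) + 1))⁻¹ - (Real.sqrt ((m : ℝ) + 2))⁻¹) := by
  unfold bfun Ffun
  push_cast
  ring_nf

-- ratio helper
lemma tendsto_sqrt_ratio (c : ℝ) (hc : 0 ≤ c) :
    Tendsto (fun m : ℕ => Real.sqrt ((m : ℝ) + c) / Real.sqrt m) atTop (𝓝 1) := by
  have h0 : Tendsto (fun m : ℕ => 1 + c / (m : ℝ)) atTop (𝓝 1) := by
    have := tendsto_const_div_atTop_nhds_zero_nat c
    simpa using tendsto_const_nhds.add this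
  have h1 : Tendsto (fun m : ℕ => ((m : ℝ) + c) / m) atTop (𝓝 1) := by
    refine h0.congr' ?_
    filter_upwards [eventually_ge_atTop 1] with m hm
    have : (m : ℝ) ≠ 0 := by positivity
    field_simp
  have h2 : Tendsto (fun m : ℕ => Real.sqrt (((m : ℝ) + c) / m)) atTop (𝓝 1) := by
    have := (Real.continuous_sqrt.tendsto' 1 1 Real.sqrt_one).comp h1
    exact this
  refine h2.congr' ?_
  filter_upwards [eventually_ge_atTop 1] with m hm
  rw [Real.sqrt_div (by positivity) (m : ℝ)]

-- step B: pointwise identity for m ≥ 1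
lemma stepB {m : ℕ} (hm : 1 ≤ m) :
    (m : ℝ) ^ (m - 1) * Real.exp (-(m : ℝ)) / (Real.sqrt (2 * m * π) * ((m : ℝ) / Real.exp 1) ^ m)
      = ((m : ℝ) * Real.sqrt (2 * m * π))⁻¹ := by
  have hm0 : (0 : ℝ) < m := by exact_mod_cast hm
  have hs : (0 : ℝ) < Real.sqrt (2 * m * π) := Real.sqrt_pos.2 (by positivity)
  have he : Real.exp (-(m : ℝ)) = (Real.exp 1 ^ m)⁻¹ := by
    rw [Real.exp_neg, ← Real.exp_one_pow]
  have hpow : (m : ℝ) ^ (m - 1) * m = (m : ℝ) ^ m := by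
    rw [← pow_succ]; congr 1; omega
  have hexp : (0 : ℝ) < Real.exp 1 ^ m := by positivity
  rw [div_pow, he]
  field_simp
  linear_combination hpow

-- step C pointwise identity
lemma stepC {m : ℕ} (hm : 1 ≤ m) :
    ((m : ℝ) * Real.sqrt (2 * m * π))⁻¹ / bfun m
      = 1 / 2 * ((Real.sqrt ((m : ℝ) + 1) / Real.sqrt m) * (Real.sqrt ((m : ℝ) + 2) / Real.sqrt m)
          * (Real.sqrt ((m : ℝ) + 1) / Real.sqrt m + Real.sqrt ((m : ℝ) + 2) / Real.sqrt m)) := by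
  have hm0 : (0 : ℝ) < m := by exact_mod_cast hm
  set x := Real.sqrt (m : ℝ) with hxdef
  set y := Real.sqrt ((m : ℝ) + 1) with hydef
  set z := Real.sqrt ((m : ℝ) + 2) with hzdef
  have hx0 : 0 < x := Real.sqrt_pos.2 hm0
  have hy0 : 0 < y := Real.sqrt_pos.2 (by positivity)
  have hz0 : 0 < z := Real.sqrt_pos.2 (by positivity)
  have hx2 : x ^ 2 = (m : ℝ) := Real.sq_sqrt hm0.le
  have hy2 : y ^ 2 = (m : ℝ) + 1 := Real.sq_sqrt (by positivity)
  have hz2 : z ^ 2 = (m : ℝ) + 2 := Real.sq_sqrt (by positivity)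
  have hsplit : Real.sqrt (2 * m * π) = Real.sqrt 2 * x * Real.sqrt π := by
    rw [Real.sqrt_mul (by positivity), Real.sqrt_mul (by norm_num)]
  have hyz : y⁻¹ - z⁻¹ = (y * z * (y + z))⁻¹ := by
    refine eq_inv_of_mul_eq_one_left ?_
    field_simp
    linear_combination hz2 - hy2
  rw [bfun_eq, hyz, hsplit]
  have h2 : Real.sqrt 2 * Real.sqrt 2 = 2 := Real.mul_self_sqrt (by norm_num)
  have hp : (0:ℝ) < Real.sqrt π := Real.sqrt_pos.2 Real.pi_pos
  have h2p : (0:ℝ) < Real.sqrt 2 := by positivity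
  rw [← hx2]
  field_simp
  ring_nf
  linear_combination (-1 : ℝ) * h2

lemma afun_equiv : (fun m => borelPMF 1 m) ~[atTop] bfun := by
  have h1 : (fun m => borelPMF 1 m) =ᶠ[atTop]
      (fun m : ℕ => (m : ℝ) ^ (m - 1) * Real.exp (-(m : ℝ)) / (Nat.factorial m)) := by
    refine Eventually.of_forall fun m => ?_
    simp [borelPMF]
  have h2 : (fun m : ℕ => (m : ℝ) ^ (m - 1) * Real.exp (-(m : ℝ)) / (Nat.factorial m))
      ~[atTop] (fun m : ℕ => (m : ℝ) ^ (m - 1) * Real.exp (-(m : ℝ)) /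
        (Real.sqrt (2 * m * π) * ((m : ℝ) / Real.exp 1) ^ m)) :=
    IsEquivalent.div (IsEquivalent.refl) Stirling.factorial_isEquivalent_stirling
  have h3 : (fun m : ℕ => (m : ℝ) ^ (m - 1) * Real.exp (-(m : ℝ)) /
        (Real.sqrt (2 * m * π) * ((m : ℝ) / Real.exp 1) ^ m))
      =ᶠ[atTop] (fun m : ℕ => ((m : ℝ) * Real.sqrt (2 * m * π))⁻¹) := by
    filter_upwards [eventually_ge_atTop 1] with m hm
    exact stepB hm
  have h4 : (fun m : ℕ => ((m : ℝ) * Real.sqrt (2 * m * π))⁻¹) ~[atTop] bfun := by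
    rw [isEquivalent_iff_tendsto_one (Eventually.of_forall fun m => (bfun_pos m).ne')]
    have hA := tendsto_sqrt_ratio 1 zero_le_one
    have hB := tendsto_sqrt_ratio 2 (by norm_num)
    have hlim : Tendsto (fun m : ℕ => 1 / 2 *
        ((Real.sqrt ((m : ℝ) + 1) / Real.sqrt m) * (Real.sqrt ((m : ℝ) + 2) / Real.sqrt m)
          * (Real.sqrt ((m : ℝ) + 1) / Real.sqrt m + Real.sqrt ((m : ℝ) + 2) / Real.sqrt m)))
        atTop (𝓝 1) := by
      have := ((hA.mul hB).mul (hA.add hB)).const_mul (1 / 2 : ℝ)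
      norm_num at this
      exact this
    refine hlim.congr' ?_
    filter_upwards [eventually_ge_atTop 1] with m hm
    exact (stepC hm).symm
  exact ((h2.congr_left h1.symm).congr_right h3).trans h4

lemma mass_eq (t : ℝ) (ht : 1 ≤ t) {m : ℕ} (hm : 1 ≤ m) :
    (m : ℝ) * csol t m = t⁻¹ * borelPMF 1 m := by
  have hm0 : (m : ℝ) ≠ 0 := by
    have : (0 : ℝ) < m := by exact_mod_cast hm
    exact this.ne'
  have ht0 : t ≠ 0 := by linarith
  unfold csol
  by_cases h : t ≤ 1
  · have h1 : t = 1 := le_antisymm h ht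
    subst h1
    simp only [if_pos le_rfl]
    field_simp
  · simp only [if_neg h]
    field_simp

theorem stmt8 (t : ℝ) (ht : 1 ≤ t) :
    Asymptotics.IsEquivalent Filter.atTop
      (fun k : ℕ => ∑' j : ℕ, ((k + j : ℕ) : ℝ) * csol t (k + j))
      (fun k : ℕ => Real.sqrt 2 / (t * Real.sqrt Real.pi) * (k : ℝ) ^ (-(1/2) : ℝ)) := by
  have ht0 : (0 : ℝ) < t := lt_of_lt_of_le one_pos ht
  have htail : (fun k => ∑' j, borelPMF 1 (k + j)) ~[atTop] (fun k => ∑' j, bfun (k + j)) :=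
    tail_isEquivalent (fun m => (bfun_pos m).le) bfun_summable afun_equiv
  have hbF : (fun k => ∑' j, bfun (k + j)) = Ffun := funext bfun_tail
  rw [hbF] at htail
  have hS : (fun k : ℕ => ∑' j : ℕ, ((k + j : ℕ) : ℝ) * csol t (k + j)) =ᶠ[atTop]
      (fun k => t⁻¹ * ∑' j, borelPMF 1 (k + j)) := by
    filter_upwards [eventually_ge_atTop 1] with k hk
    have hterm : ∀ j : ℕ, ((k + j : ℕ) : ℝ) * csol t (k + j) = t⁻¹ * borelPMF 1 (k + j) :=
      fun j => mass_eq t ht (le_trans hk (Nat.le_add_right k j))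
    rw [tsum_congr hterm, tsum_mul_left]
  have h5 : (fun k => t⁻¹ * ∑' j, borelPMF 1 (k + j)) ~[atTop] (fun k => t⁻¹ * Ffun k) :=
    (IsEquivalent.refl (u := fun _ : ℕ => t⁻¹)).mul htail
  have h6 : (fun k => t⁻¹ * Ffun k) ~[atTop]
      (fun k : ℕ => Real.sqrt 2 / (t * Real.sqrt Real.pi) * (k : ℝ) ^ (-(1/2) : ℝ)) := by
    have hz : ∀ᶠ k : ℕ in atTop,
        Real.sqrt 2 / (t * Real.sqrt Real.pi) * (k : ℝ) ^ (-(1/2) : ℝ) ≠ 0 := by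
      filter_upwards [eventually_ge_atTop 1] with k hk
      have hk0 : (0 : ℝ) < k := by exact_mod_cast hk
      positivity
    rw [isEquivalent_iff_tendsto_one hz]
    have hinv : Tendsto (fun m : ℕ => Real.sqrt m / Real.sqrt ((m : ℝ) + 1)) atTop (𝓝 1) := by
      have := (tendsto_sqrt_ratio 1 zero_le_one).inv₀ one_ne_zero
      simp only [inv_div, inv_one] at this
      exact this
    refine hinv.congr' ?_
    filter_upwards [eventually_ge_atTop 1] with k hk
    have hk0 : (0 : ℝ) < k := by exact_mod_cast hk
    have hrpow : (k : ℝ) ^ (-(1/2) : ℝ) = (Real.sqrt k)⁻¹ := by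
      rw [Real.rpow_neg hk0.le, Real.sqrt_eq_rpow]
    have hsk : (0 : ℝ) < Real.sqrt k := Real.sqrt_pos.2 hk0
    have hsk1 : (0 : ℝ) < Real.sqrt ((k : ℝ) + 1) := Real.sqrt_pos.2 (by positivity)
    have hsp : (0 : ℝ) < Real.sqrt π := Real.sqrt_pos.2 Real.pi_pos
    have hs2 : (0 : ℝ) < Real.sqrt 2 := by positivity
    simp only [Pi.div_apply, Ffun, hrpow]
    field_simp
  exact ((h5.trans h6).congr_left hS.symm)
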